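/- There is a unique t_0 ∈ (0,1) with t_0·e^{t_0} = 1 (equivalently t_0 = ∫_{t_0}^1 (1/x) dx), and ∫_{t_0}^1 (x − 1 + t_0/x) dx = t_0²/2 + t_0 − 1/2, which is strictly greater than 0.22 and in particular strictly greater than 1/6. -/

import Mathlib

open Real Set intervalIntegral

lemma wmono : ∀ a b : ℝ, 0 ≤ a → a < b → a * Real.exp a < b * Real.exp b := by
  intro a b ha hab
  have := Real.exp_pos a
  have h2 : Real.exp a < Real.exp b := Real.exp_lt_exp.2 hab
  nlinarith [Real.exp_pos b]

lemma exp_563 : Real.exp 0.563 < 1.7575 := by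
  have h := Real.exp_bound (x := 0.563)
    (by rw [abs_of_nonneg] <;> norm_num) (n := 4) (by norm_num)
  rw [abs_le] at h
  have h2 := h.2
  rw [abs_of_nonneg (by norm_num : (0:ℝ) ≤ 0.563)] at h2
  simp [Finset.sum_range_succ, Nat.factorial] at h2
  norm_num at h2 ⊢
  linarith

lemma t0_lb {t0 : ℝ} (h0 : 0 < t0) (h1 : t0 < 1) (he : t0 * Real.exp t0 = 1) :
    0.563 < t0 := by
  by_contra hc
  push_neg at hc
  have hm : t0 * Real.exp t0 ≤ 0.563 * Real.exp 0.563 :=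
    mul_le_mul hc (Real.exp_le_exp.2 hc) (Real.exp_pos t0).le (by norm_num)
  have h3 : (0.563:ℝ) * Real.exp 0.563 < 0.563 * 1.7575 :=
    mul_lt_mul_of_pos_left exp_563 (by norm_num)
  rw [he] at hm
  nlinarith

theorem uniform_first_price_optimal_utility :
    (∃! t0 : ℝ, t0 ∈ Set.Ioo (0:ℝ) 1 ∧ t0 * Real.exp t0 = 1) ∧
    ∀ t0 ∈ Set.Ioo (0:ℝ) 1, t0 * Real.exp t0 = 1 →
      t0 = (∫ x in t0..1, 1 / x) ∧
      (∫ x in t0..1, (x - 1 + t0 / x)) = t0 ^ 2 / 2 + t0 - 1 / 2 ∧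
      (0.22 : ℝ) < t0 ^ 2 / 2 + t0 - 1 / 2 ∧
      (1 / 6 : ℝ) < t0 ^ 2 / 2 + t0 - 1 / 2 := by
  constructor
  · -- existence and uniqueness
    have hcont : ContinuousOn (fun t : ℝ => t * Real.exp t) (Set.Icc 0 1) :=
      (continuous_id.mul Real.continuous_exp).continuousOn
    have hmem : (1:ℝ) ∈ Set.Ioo ((fun t : ℝ => t * Real.exp t) 0)
        ((fun t : ℝ => t * Real.exp t) 1) := by
      simp only [Set.mem_Ioo]
      constructor
      · norm_num
      · have := Real.exp_one_gt_d9
        norm_num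
    obtain ⟨t0, ht0, hft0'⟩ := intermediate_value_Ioo (by norm_num : (0:ℝ) ≤ 1) hcont hmem
    have hft0 : t0 * Real.exp t0 = 1 := hft0'
    refine ⟨t0, ⟨ht0, hft0⟩, ?_⟩
    rintro s ⟨hs, hfs⟩
    by_contra hne
    rcases lt_or_gt_of_ne hne with hlt | hlt
    · have := wmono s t0 hs.1.le hlt
      rw [hfs, hft0] at this; exact lt_irrefl _ this
    · have := wmono t0 s ht0.1.le hlt
      rw [hfs, hft0] at this; exact lt_irrefl _ this
  · rintro t0 ⟨h0, h1⟩ he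
    have hexp : Real.exp t0 = 1 / t0 := by field_simp at he ⊢; linarith
    have hlog : Real.log t0 = -t0 := by
      have : Real.log (Real.exp t0) = Real.log (1 / t0) := by rw [hexp]
      rw [Real.log_exp, one_div, Real.log_inv] at this
      linarith
    have hne : (0:ℝ) ∉ Set.uIcc t0 1 := by
      rw [Set.uIcc_of_le h1.le]
      intro hmem
      exact absurd hmem.1 (by linarith)
    have hint1 : (∫ x in t0..1, 1 / x) = Real.log (1 / t0) := integral_one_div hne
    have heq1 : t0 = (∫ x in t0..1, 1 / x) := by
      rw [hint1, one_div, Real.log_inv, hlog]; ring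
    refine ⟨heq1, ?_, ?_, ?_⟩
    · have hi1 : IntervalIntegrable (fun x : ℝ => x - 1) MeasureTheory.volume t0 1 :=
        (continuous_id.sub continuous_const).intervalIntegrable _ _
      have hi2 : IntervalIntegrable (fun x : ℝ => t0 / x) MeasureTheory.volume t0 1 := by
        apply ContinuousOn.intervalIntegrable
        apply ContinuousOn.div continuousOn_const continuousOn_id
        intro x hx hx0
        simp only [id_eq] at hx0
        subst hx0
        exact hne hx
      have : (∫ x in t0..1, (x - 1 + t0 / x)) =
          (∫ x in t0..1, (x - 1)) + (∫ x in t0..1, t0 / x) :=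
        intervalIntegral.integral_add hi1 hi2
      rw [this]
      have e1 : (∫ x in t0..1, (x - 1)) = (1 - t0^2)/2 - (1 - t0) := by
        have := intervalIntegral.integral_sub
          (intervalIntegrable_id (a := t0) (b := 1) (μ := MeasureTheory.volume))
          (_root_.intervalIntegrable_const (c := (1:ℝ)) (a := t0) (b := 1) (μ := MeasureTheory.volume))
        rw [this, integral_id, intervalIntegral.integral_const]
        simp [smul_eq_mul]
      have e2 : (∫ x in t0..1, t0 / x) = t0 * Real.log (1/t0) := by
        have : (∫ x in t0..1, t0 / x) = t0 * (∫ x in t0..1, 1 / x) := by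
          rw [← intervalIntegral.integral_const_mul]
          congr 1; ext x; ring
        rw [this, hint1]
      rw [e1, e2, one_div, Real.log_inv, hlog]
      ring
    · have := t0_lb h0 h1 he
      nlinarith
    · have := t0_lb h0 h1 he
      nlinarith
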